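/- Let C ∈ M_d(ℂ) ⊗ M_n(ℂ) be positive semidefinite with rank n, partial trace over the first factor equal to an invertible matrix, and suppose C = ∑_{j=1}^m ξ_j ξ_j* where each ξ_j = x_j ⊗ y_j is a simple tensor. Then m ≥ n, and there exist simple tensors γ_1, …, γ_n ∈ ℂ^d ⊗ ℂⁿ such that C = ∑_{k=1}^n γ_k γ_k*. -/

import Mathlib

open Matrix BigOperators
open scoped ComplexOrder

noncomputable section

section Helpers

lemma exists_dual_ne_zero {d : ℕ} {ι : Type*} [DecidableEq ι] (s : Finset ι)
    (x : ι → Fin d → ℂ) (hx : ∀ j ∈ s, x j ≠ 0) :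
    ∃ φ : Fin d → ℂ, ∀ j ∈ s, (∑ i, φ i * x j i) ≠ 0 := by
  classical
  induction s using Finset.induction_on with
  | empty => exact ⟨0, by simp⟩
  | @insert j s hj ih =>
    obtain ⟨φ, hφ⟩ := ih (fun l hl => hx l (Finset.mem_insert_of_mem hl))
    have hxj : x j ≠ 0 := hx j (Finset.mem_insert_self j s)
    obtain ⟨i0, hi0⟩ : ∃ i0, x j i0 ≠ 0 := by
      by_contra h
      push_neg at h
      exact hxj (funext h)
    set ψ : Fin d → ℂ := Pi.single i0 1 with hψ
    have hψx : ∀ l, (∑ i, ψ i * x l i) = x l i0 := by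
      intro l
      simp [hψ, Pi.single_apply]
    set T : Finset ℂ :=
      (insert j s).image (fun l => -(∑ i, φ i * x l i) / (∑ i, ψ i * x l i)) with hT
    obtain ⟨t, ht⟩ := T.exists_notMem
    refine ⟨φ + t • ψ, ?_⟩
    intro l hl
    have key : (∑ i, φ i * x l i) ≠ 0 ∨ (∑ i, ψ i * x l i) ≠ 0 := by
      rcases Finset.mem_insert.mp hl with h | h
      · right; rw [h, hψx]; exact hi0
      · left; exact hφ l h
    have hsum : (∑ i, (φ + t • ψ) i * x l i)
        = (∑ i, φ i * x l i) + t * (∑ i, ψ i * x l i) := by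
      rw [Finset.mul_sum, ← Finset.sum_add_distrib]
      congr 1; funext i; simp; ring
    rw [hsum]
    intro hcon
    by_cases hB : (∑ i, ψ i * x l i) = 0
    · rw [hB, mul_zero, add_zero] at hcon
      rcases key with h | h
      · exact h hcon
      · exact h hB
    · have : t = -(∑ i, φ i * x l i) / (∑ i, ψ i * x l i) := by
        field_simp
        linear_combination hcon
      exact ht (hT ▸ Finset.mem_image.mpr ⟨l, hl, this.symm⟩)

lemma vecMulVec_mulVec_conj {K N : Type*} [Fintype K] [Fintype N]
    (M : Matrix K N ℂ) (c : N → ℂ) :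
    vecMulVec (M.mulVec c) (star (M.mulVec c)) = M * vecMulVec c (star c) * Mᴴ := by
  ext p q
  simp only [vecMulVec_apply, Pi.star_apply, mul_apply, mulVec, dotProduct,
    conjTranspose_apply, star_sum, star_mul', Finset.sum_mul, Finset.mul_sum]
  congr 1; funext o
  congr 1; funext l
  ring

open scoped MatrixOrder in
/-- The square root of a positive semidefinite matrix. -/
def Matrix.PosSemidef.sqrt {N : Type*} [Fintype N] [DecidableEq N] {X : Matrix N N ℂ}
    (_ : X.PosSemidef) : Matrix N N ℂ := CFC.sqrt X

open scoped MatrixOrder in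
lemma Matrix.PosSemidef.posSemidef_sqrt {N : Type*} [Fintype N] [DecidableEq N]
    {X : Matrix N N ℂ} (hX : X.PosSemidef) : hX.sqrt.PosSemidef :=
  (CFC.sqrt_nonneg X).posSemidef

open scoped MatrixOrder in
lemma Matrix.PosSemidef.sqrt_mul_self {N : Type*} [Fintype N] [DecidableEq N]
    {X : Matrix N N ℂ} (hX : X.PosSemidef) : hX.sqrt * hX.sqrt = X :=
  CFC.sqrt_mul_sqrt_self X hX.nonneg

lemma sqrt_row_zero {N : Type*} [Fintype N] [DecidableEq N] {X : Matrix N N ℂ}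
    (hX : X.PosSemidef) {k : N} (hk : X k k = 0) : ∀ l, hX.sqrt k l = 0 := by
  have hH : hX.sqrt.IsHermitian := hX.posSemidef_sqrt.1
  have h1 : ∑ l, (Complex.normSq (hX.sqrt k l) : ℂ) = 0 := by
    calc ∑ l, (Complex.normSq (hX.sqrt k l) : ℂ)
        = (hX.sqrt * hX.sqrt) k k := by
          rw [mul_apply]
          congr 1; funext l
          have h3 : hX.sqrt l k = star (hX.sqrt k l) := (hH.apply l k).symm
          rw [h3, Complex.star_def, Complex.mul_conj]
      _ = X k k := by rw [hX.sqrt_mul_self]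
      _ = 0 := hk
  have h2 : ∑ l, Complex.normSq (hX.sqrt k l) = 0 := by exact_mod_cast h1
  intro l
  have := (Finset.sum_eq_zero_iff_of_nonneg (fun i _ => Complex.normSq_nonneg _)).mp
    h2 l (Finset.mem_univ l)
  exact Complex.normSq_eq_zero.mp this

lemma psd_supported_decomp {n : ℕ} {α : Type*} (u : Fin n → α)
    (G : Matrix (Fin n) (Fin n) ℂ) (hG : G.PosSemidef)
    (hsupp : ∀ k l, u k ≠ u l → G k l = 0) :
    ∃ h : Fin n → (Fin n → ℂ),
      G = ∑ k, vecMulVec (h k) (star (h k)) ∧ ∀ k l, h k l ≠ 0 → u l = u k := by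
  classical
  have hne : ∀ k : Fin n, (Finset.univ.filter (fun l => u l = u k)).Nonempty :=
    fun k => ⟨k, by simp⟩
  set rep : Fin n → Fin n := fun k => (Finset.univ.filter (fun l => u l = u k)).min' (hne k)
    with hrep
  have hrep_u : ∀ k, u (rep k) = u k := fun k =>
    (Finset.mem_filter.mp (Finset.min'_mem _ (hne k))).2
  have hrep_eq : ∀ k l, u k = u l → rep k = rep l := by
    intro k l h
    have hs : (Finset.univ.filter (fun l' => u l' = u k))
        = (Finset.univ.filter (fun l' => u l' = u l)) := by
      ext a; simp [h]
    have min'_congr : ∀ (s t : Finset (Fin n)) (hs : s.Nonempty) (ht : t.Nonempty),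
        s = t → s.min' hs = t.min' ht := by
      rintro s t hs' ht' rfl; rfl
    simp only [hrep]
    exact min'_congr _ _ _ _ hs
  have hrep_iff : ∀ k l, rep k = rep l ↔ u k = u l := by
    intro k l
    refine ⟨fun h => ?_, hrep_eq k l⟩
    rw [← hrep_u k, ← hrep_u l, h]
  set Q : Fin n → Matrix (Fin n) (Fin n) ℂ :=
    fun a => Matrix.diagonal (fun k => if rep k = a then (1:ℂ) else 0) with hQdef
  set Ga : Fin n → Matrix (Fin n) (Fin n) ℂ := fun a => Q a * G * (Q a)ᴴ with hGadef
  have hGaPsd : ∀ a, (Ga a).PosSemidef := fun a => hG.mul_mul_conjTranspose_same (Q a)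
  have hGa : ∀ a k l, Ga a k l
      = (if rep k = a then (1:ℂ) else 0) * G k l * (if rep l = a then (1:ℂ) else 0) := by
    intro a k l
    simp only [hGadef, hQdef, diagonal_conjTranspose, Matrix.mul_diagonal,
      Matrix.diagonal_mul, Pi.star_apply]
    rw [apply_ite star, star_one, star_zero]
  have hrow : ∀ a k, rep k ≠ a → ∀ l, (hGaPsd a).sqrt k l = 0 := by
    intro a k hk l
    refine sqrt_row_zero (hGaPsd a) ?_ l
    rw [hGa a k k, if_neg hk]
    ring
  have hcol : ∀ a k l, rep k ≠ a → (hGaPsd a).sqrt l k = 0 := by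
    intro a k l hk
    have hH := (hGaPsd a).posSemidef_sqrt.1
    have h5 : star ((hGaPsd a).sqrt l k) = (hGaPsd a).sqrt k l := hH.apply k l
    rw [hrow a k hk l] at h5
    exact star_eq_zero.mp h5
  refine ⟨fun k l => (hGaPsd (rep k)).sqrt l k, ?_, ?_⟩
  · ext p q
    symm
    have step1 : ∀ a, ∑ k, (if rep k = a then
          (hGaPsd a).sqrt p k * star ((hGaPsd a).sqrt q k) else 0)
        = Ga a p q := by
      intro a
      have hH := (hGaPsd a).posSemidef_sqrt.1
      calc ∑ k, (if rep k = a then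
            (hGaPsd a).sqrt p k * star ((hGaPsd a).sqrt q k) else 0)
          = ∑ k, (hGaPsd a).sqrt p k * star ((hGaPsd a).sqrt q k) := by
            refine Finset.sum_congr rfl (fun k _ => ?_)
            by_cases h : rep k = a
            · rw [if_pos h]
            · rw [if_neg h, hcol a k p h, zero_mul]
        _ = ∑ k, (hGaPsd a).sqrt p k * (hGaPsd a).sqrt k q := by
            refine Finset.sum_congr rfl (fun k _ => ?_)
            rw [hH.apply k q]
        _ = ((hGaPsd a).sqrt * (hGaPsd a).sqrt) p q := (mul_apply).symm
        _ = Ga a p q := by rw [(hGaPsd a).sqrt_mul_self]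
    have step4 : ∑ a, Ga a p q = G p q := by
      by_cases hpq : rep p = rep q
      · rw [Finset.sum_eq_single (rep p)]
        · rw [hGa, if_pos rfl, if_pos hpq.symm]; ring
        · intro b _ hb
          rw [hGa, if_neg (fun h => hb h.symm)]; ring
        · intro h; exact absurd (Finset.mem_univ _) h
      · have h0 : G p q = 0 := hsupp p q (fun h => hpq (hrep_eq p q h))
        rw [h0]
        refine Finset.sum_eq_zero (fun a _ => ?_)
        rw [hGa]
        by_cases h1 : rep p = a
        · by_cases h2 : rep q = a
          · exact absurd (h1.trans h2.symm) hpq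
          · rw [if_neg h2]; ring
        · rw [if_neg h1]; ring
    calc (∑ k, vecMulVec (fun l => (hGaPsd (rep k)).sqrt l k)
            (star fun l => (hGaPsd (rep k)).sqrt l k)) p q
        = ∑ k, (hGaPsd (rep k)).sqrt p k * star ((hGaPsd (rep k)).sqrt q k) := by
          simp [Matrix.sum_apply, vecMulVec_apply]
      _ = ∑ k, ∑ a, (if rep k = a then
            (hGaPsd a).sqrt p k * star ((hGaPsd a).sqrt q k) else 0) := by
          refine Finset.sum_congr rfl (fun k _ => ?_)
          rw [Finset.sum_ite_eq (Finset.univ) (rep k)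
            (fun a => (hGaPsd a).sqrt p k * star ((hGaPsd a).sqrt q k))]
          simp
      _ = ∑ a, ∑ k, (if rep k = a then
            (hGaPsd a).sqrt p k * star ((hGaPsd a).sqrt q k) else 0) := Finset.sum_comm
      _ = ∑ a, Ga a p q := Finset.sum_congr rfl (fun a _ => step1 a)
      _ = G p q := step4
  · intro k l hl
    by_contra hne'
    exact hl (hrow (rep k) l (fun h => hne' ((hrep_iff l k).mp h)) k)

lemma span_y_eq_top {d n m : ℕ}
    (C : Matrix (Fin d × Fin n) (Fin d × Fin n) ℂ)
    (hpt : IsUnit (Matrix.of fun r s : Fin n => ∑ i : Fin d, C (i, r) (i, s)))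
    (x : Fin m → (Fin d → ℂ)) (y : Fin m → (Fin n → ℂ))
    (hCe : ∀ p q : Fin d × Fin n, C p q
      = ∑ j, (x j p.1 * y j p.2) * star (x j q.1 * y j q.2)) :
    Submodule.span ℂ (y '' {j | x j ≠ 0 ∧ y j ≠ 0}) = ⊤ := by
  classical
  have hsurj : Function.Surjective
      (Matrix.of fun r s : Fin n => ∑ i : Fin d, C (i, r) (i, s)).mulVec :=
    Matrix.mulVec_surjective_iff_isUnit.mpr hpt
  rw [Submodule.eq_top_iff']
  intro w
  obtain ⟨z, hz⟩ := hsurj w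
  rw [← hz]
  have hexp : (Matrix.of fun r s : Fin n => ∑ i : Fin d, C (i, r) (i, s)).mulVec z
      = ∑ p : Fin d × Fin m,
        ((∑ s, star (x p.2 p.1 * y p.2 s) * z s) * x p.2 p.1) • y p.2 := by
    funext r
    simp only [mulVec, dotProduct, Matrix.of_apply, hCe, Finset.sum_apply,
      Pi.smul_apply, smul_eq_mul, Finset.sum_mul]
    rw [Fintype.sum_prod_type]
    rw [Finset.sum_comm]
    refine Finset.sum_congr rfl (fun i _ => ?_)
    rw [Finset.sum_comm]
    refine Finset.sum_congr rfl (fun j _ => ?_)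
    refine Finset.sum_congr rfl (fun s _ => ?_)
    ring
  rw [hexp]
  refine Submodule.sum_mem _ (fun p _ => ?_)
  by_cases hx0 : x p.2 = 0
  · have h1 : x p.2 p.1 = 0 := by rw [hx0]; rfl
    rw [h1, mul_zero, zero_smul]; exact Submodule.zero_mem _
  by_cases hy0 : y p.2 = 0
  · rw [hy0, smul_zero]; exact Submodule.zero_mem _
  · exact Submodule.smul_mem _ _
      (Submodule.subset_span ⟨p.2, ⟨hx0, hy0⟩, rfl⟩)

lemma middle_step {d n m : ℕ}
    (x : Fin m → (Fin d → ℂ)) (y : Fin m → (Fin n → ℂ))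
    (ξ : Fin m → (Fin d × Fin n → ℂ))
    (hξ : ∀ j, ξ j = fun p => x j p.1 * y j p.2)
    (hspan : Submodule.span ℂ (y '' {j | x j ≠ 0 ∧ y j ≠ 0}) = ⊤)
    (hfinV : Module.finrank ℂ (Submodule.span ℂ (Set.range ξ)) = n) :
    ∃ (u : Fin n → (Fin d → ℂ)) (v : Fin n → (Fin n → ℂ)) (c : Fin m → Fin n → ℂ),
      (∀ j, ξ j = (Matrix.of fun (p : Fin d × Fin n) k => u k p.1 * v k p.2).mulVec (c j)) ∧
      (∀ j, ∃ w, ∀ k, c j k ≠ 0 → u k = w) := by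
  classical
  obtain ⟨φ, hφ0⟩ := exists_dual_ne_zero (Finset.univ.filter (fun j => x j ≠ 0)) x
    (fun j hj => (Finset.mem_filter.mp hj).2)
  have hφ : ∀ j, x j ≠ 0 → (∑ i, φ i * x j i) ≠ 0 :=
    fun j hj => hφ0 j (Finset.mem_filter.mpr ⟨Finset.mem_univ _, hj⟩)
  set β : Fin m → ℂ := fun j => ∑ i, φ i * x j i with hβ
  set L : ((Fin d × Fin n) → ℂ) →ₗ[ℂ] (Fin n → ℂ) :=
    { toFun := fun w r => ∑ i, φ i * w (i, r)
      map_add' := by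
        intro a b; funext r
        simp [mul_add, Finset.sum_add_distrib]
      map_smul' := by
        intro t a; funext r
        simp only [Pi.smul_apply, smul_eq_mul, RingHom.id_apply]
        rw [Finset.mul_sum]
        exact Finset.sum_congr rfl fun i _ => by ring } with hL
  have hLap : ∀ w r, L w r = ∑ i, φ i * w (i, r) := fun w r => rfl
  have hLξ : ∀ j, L (ξ j) = β j • y j := by
    intro j; funext r
    rw [hLap, Pi.smul_apply, smul_eq_mul, hβ, Finset.sum_mul, hξ]
    exact Finset.sum_congr rfl fun i _ => by ring
  set V := Submodule.span ℂ (Set.range ξ) with hV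
  set Lres := L.domRestrict V with hLres
  have hsurj : Function.Surjective Lres := by
    rw [← LinearMap.range_eq_top, ← top_le_iff, ← hspan, Submodule.span_le]
    rintro w ⟨j, ⟨hx0, hy0⟩, rfl⟩
    refine ⟨⟨(β j)⁻¹ • ξ j, Submodule.smul_mem _ _ (Submodule.subset_span ⟨j, rfl⟩)⟩, ?_⟩
    show L ((β j)⁻¹ • ξ j) = y j
    rw [_root_.map_smul, hLξ j, smul_smul, inv_mul_cancel₀ (hφ j hx0), one_smul]
  have hinj : Function.Injective Lres := by
    have hfr : Module.finrank ℂ V = Module.finrank ℂ (Fin n → ℂ) := by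
      rw [hV, hfinV, Module.finrank_fin_fun]
    exact (LinearMap.injective_iff_surjective_of_finrank_eq_finrank hfr).mpr hsurj
  -- extract a basis from the y's
  obtain ⟨bset, hbsub, hbspan, hbli⟩ :=
    exists_linearIndependent ℂ (y '' {j | x j ≠ 0 ∧ y j ≠ 0})
  have hbfin : bset.Finite := Set.Finite.subset (Set.finite_range y)
    (hbsub.trans (Set.image_subset_range _ _))
  haveI := hbfin.fintype
  have hcard : Fintype.card bset = n := by
    have h1 := finrank_span_set_eq_card hbli
    rw [hbspan, hspan, finrank_top, Module.finrank_fin_fun, Set.toFinset_card] at h1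
    exact h1.symm
  let e : Fin n ≃ bset := (Fintype.equivFinOfCardEq hcard).symm
  set v : Fin n → (Fin n → ℂ) := fun k => (e k : Fin n → ℂ) with hv
  have hvli : LinearIndependent ℂ v := hbli.comp e e.injective
  have hvspan : ⊤ ≤ Submodule.span ℂ (Set.range v) := by
    have hr : Set.range v = bset := by
      have : Set.range v = Set.range ((↑) : bset → (Fin n → ℂ)) :=
        e.surjective.range_comp _
      rw [this, Subtype.range_coe]
    rw [hr, hbspan, hspan]
  let bas : Module.Basis (Fin n) ℂ (Fin n → ℂ) := Module.Basis.mk hvli hvspan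
  have hσex : ∀ k, ∃ j, (x j ≠ 0 ∧ y j ≠ 0) ∧ y j = v k := by
    intro k
    obtain ⟨j, hj, hyj⟩ := hbsub (e k).2
    exact ⟨j, hj, hyj⟩
  choose σ hσ1 hσ2 using hσex
  set u : Fin n → (Fin d → ℂ) := fun k => (β (σ k))⁻¹ • x (σ k) with hu
  set ξ' : Fin n → ((Fin d × Fin n) → ℂ) := fun k => fun p => u k p.1 * v k p.2 with hξ'
  have hξ'smul : ∀ k, ξ' k = (β (σ k))⁻¹ • ξ (σ k) := by
    intro k
    funext p
    have h1 : ξ (σ k) p = x (σ k) p.1 * y (σ k) p.2 := congrFun (hξ (σ k)) p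
    have h2 : y (σ k) p.2 = v k p.2 := congrFun (hσ2 k) p.2
    show u k p.1 * v k p.2 = (β (σ k))⁻¹ * ξ (σ k) p
    rw [h1, ← h2]
    show ((β (σ k))⁻¹ * x (σ k) p.1) * y (σ k) p.2
      = (β (σ k))⁻¹ * (x (σ k) p.1 * y (σ k) p.2)
    ring
  have hξ'V : ∀ k, ξ' k ∈ V := by
    intro k
    rw [hξ'smul k]
    exact Submodule.smul_mem _ _ (Submodule.subset_span ⟨σ k, rfl⟩)
  have hLξ' : ∀ k, L (ξ' k) = v k := by
    intro k
    rw [hξ'smul k, _root_.map_smul, hLξ, smul_smul, inv_mul_cancel₀ (hφ _ (hσ1 k).1),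
      one_smul, hσ2]
  set lam : Fin m → Fin n → ℂ := fun j k => bas.repr (y j) k with hlam
  have hylam : ∀ j, y j = ∑ k, lam j k • v k := by
    intro j
    conv_lhs => rw [← bas.sum_repr (y j)]
    exact Finset.sum_congr rfl fun k _ => by rw [Module.Basis.mk_apply]
  have keyH : ∀ j, x j ≠ 0 → y j ≠ 0 → ξ j = ∑ k, (β j * lam j k) • ξ' k := by
    intro j hx0 hy0
    have h1 : ξ j ∈ V := Submodule.subset_span ⟨j, rfl⟩
    have h2 : (∑ k, (β j * lam j k) • ξ' k) ∈ V :=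
      Submodule.sum_mem _ fun k _ => Submodule.smul_mem _ _ (hξ'V k)
    have hL12 : Lres ⟨ξ j, h1⟩ = Lres ⟨_, h2⟩ := by
      show L (ξ j) = L (∑ k, (β j * lam j k) • ξ' k)
      rw [hLξ j, map_sum]
      simp_rw [_root_.map_smul, hLξ']
      rw [hylam j, Finset.smul_sum]
      exact Finset.sum_congr rfl fun k _ => smul_smul _ _ _
    exact congrArg Subtype.val (hinj hL12)
  have keycoef : ∀ j, x j ≠ 0 → y j ≠ 0 → ∀ k, lam j k ≠ 0 → u k = (β j)⁻¹ • x j := by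
    intro j hx0 hy0 k hlk
    have hbj : β j ≠ 0 := hφ j hx0
    have hev : ∀ p : Fin d × Fin n,
        x j p.1 * y j p.2 = ∑ k', (β j * lam j k') * (u k' p.1 * v k' p.2) := by
      intro p
      have h3 := congrFun (keyH j hx0 hy0) p
      rw [hξ] at h3
      simpa [Finset.sum_apply, hξ'] using h3
    have hco : ∀ i k', x j i * lam j k' = β j * lam j k' * u k' i := by
      intro i k'
      have h1' : ∑ k'', (x j i * lam j k'') • v k'' = x j i • y j := by
        rw [hylam j, Finset.smul_sum]
        exact Finset.sum_congr rfl fun k'' _ => (smul_smul _ _ _).symm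
      have h2' : ∑ k'', (β j * lam j k'' * u k'' i) • v k'' = x j i • y j := by
        funext r
        simp only [Finset.sum_apply, Pi.smul_apply, smul_eq_mul]
        rw [hev (i, r)]
        exact Finset.sum_congr rfl fun k'' _ => by ring
      have hz : ∑ k'', (x j i * lam j k'' - β j * lam j k'' * u k'' i) • v k'' = 0 := by
        simp_rw [sub_smul]
        rw [Finset.sum_sub_distrib, h1', h2', sub_self]
      have h6 := Fintype.linearIndependent_iff.mp hvli _ hz k'
      exact sub_eq_zero.mp h6
    funext i
    have h4 := hco i k
    rw [Pi.smul_apply, smul_eq_mul]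
    have h5 : β j * lam j k * u k i = β j * lam j k * ((β j)⁻¹ * x j i) := by
      rw [← h4]; field_simp
    exact mul_left_cancel₀ (mul_ne_zero hbj hlk) h5
  set c : Fin m → Fin n → ℂ :=
    fun j => if x j ≠ 0 ∧ y j ≠ 0 then (fun k => β j * lam j k) else 0 with hc
  refine ⟨u, v, c, ?_, ?_⟩
  · intro j
    by_cases hj : x j ≠ 0 ∧ y j ≠ 0
    · rw [keyH j hj.1 hj.2]
      funext p
      simp only [mulVec, dotProduct, Matrix.of_apply, Finset.sum_apply, Pi.smul_apply,
        smul_eq_mul, hc, if_pos hj, hξ']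
      exact Finset.sum_congr rfl fun k _ => by ring
    · have hξ0 : ξ j = 0 := by
        rw [hξ]
        funext p
        rcases not_and_or.mp hj with h | h
        · rw [not_not] at h; simp [h]
        · rw [not_not] at h; simp [h]
      rw [hξ0]
      funext p
      simp [mulVec, dotProduct, hc, if_neg hj]
  · intro j
    by_cases hj : x j ≠ 0 ∧ y j ≠ 0
    · refine ⟨(β j)⁻¹ • x j, fun k hck => ?_⟩
      apply keycoef j hj.1 hj.2 k
      intro hl0
      apply hck
      simp [hc, if_pos hj, hl0]
    · refine ⟨0, fun k hck => absurd ?_ hck⟩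
      simp [hc, if_neg hj]

lemma final_step {d n m : ℕ}
    (C : Matrix (Fin d × Fin n) (Fin d × Fin n) ℂ)
    (ξ : Fin m → (Fin d × Fin n → ℂ))
    (hdecomp : C = ∑ j, vecMulVec (ξ j) (star (ξ j)))
    (u : Fin n → (Fin d → ℂ)) (v : Fin n → (Fin n → ℂ)) (c : Fin m → Fin n → ℂ)
    (hBc : ∀ j, ξ j = (Matrix.of fun (p : Fin d × Fin n) k => u k p.1 * v k p.2).mulVec (c j))
    (hw : ∀ j, ∃ w, ∀ k, c j k ≠ 0 → u k = w) :
    ∃ (a : Fin n → (Fin d → ℂ)) (b : Fin n → (Fin n → ℂ)),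
      C = ∑ k, vecMulVec (fun p => a k p.1 * b k p.2)
        (star fun p => a k p.1 * b k p.2) := by
  classical
  set Bm : Matrix (Fin d × Fin n) (Fin n) ℂ := Matrix.of fun p k => u k p.1 * v k p.2
    with hBm
  set G : Matrix (Fin n) (Fin n) ℂ := ∑ j, vecMulVec (c j) (star (c j)) with hG
  have hCG : C = Bm * G * Bmᴴ := by
    rw [hdecomp, hG, Matrix.mul_sum, Matrix.sum_mul]
    refine Finset.sum_congr rfl fun j _ => ?_
    rw [hBc j, vecMulVec_mulVec_conj]
  have hGpsd : G.PosSemidef := by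
    rw [hG]
    have hterm : ∀ j, (vecMulVec (c j) (star (c j))).PosSemidef := by
      intro j
      rw [vecMulVec_eq Unit, ← conjTranspose_replicateCol]
      exact posSemidef_self_mul_conjTranspose _
    exact Finset.sum_induction _ _ (fun A B hA hB => hA.add hB) Matrix.PosSemidef.zero
      (fun j _ => hterm j)
  have hsupp : ∀ k l, u k ≠ u l → G k l = 0 := by
    intro k l hkl
    rw [hG, Matrix.sum_apply]
    refine Finset.sum_eq_zero fun j _ => ?_
    obtain ⟨w, hwj⟩ := hw j
    rw [vecMulVec_apply]
    by_cases h1 : c j k = 0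
    · rw [h1, zero_mul]
    by_cases h2 : c j l = 0
    · rw [Pi.star_apply, h2, star_zero, mul_zero]
    · exact absurd ((hwj k h1).trans (hwj l h2).symm) hkl
  obtain ⟨h, hGdec, hhsupp⟩ := psd_supported_decomp u G hGpsd hsupp
  refine ⟨u, fun k s => ∑ l, h k l * v l s, ?_⟩
  have hBh : ∀ k, Bm.mulVec (h k) = fun p => u k p.1 * ∑ l, h k l * v l p.2 := by
    intro k
    funext p
    show ∑ l, Bm p l * h k l = u k p.1 * ∑ l, h k l * v l p.2
    rw [Finset.mul_sum]
    refine Finset.sum_congr rfl fun l _ => ?_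
    by_cases h0 : h k l = 0
    · rw [h0, mul_zero, zero_mul, mul_zero]
    · have h3 : Bm p l = u l p.1 * v l p.2 := rfl
      rw [h3, ← hhsupp k l h0]
      ring
  calc C = Bm * G * Bmᴴ := hCG
    _ = ∑ k, Bm * vecMulVec (h k) (star (h k)) * Bmᴴ := by
        rw [hGdec, Matrix.mul_sum, Matrix.sum_mul]
    _ = ∑ k, vecMulVec (Bm.mulVec (h k)) (star (Bm.mulVec (h k))) := by
        refine Finset.sum_congr rfl fun k _ => ?_
        rw [vecMulVec_mulVec_conj]
    _ = ∑ k, vecMulVec (fun p => u k p.1 * ∑ l, h k l * v l p.2)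
          (star fun p => u k p.1 * ∑ l, h k l * v l p.2) := by
        refine Finset.sum_congr rfl fun k _ => ?_
        rw [hBh k]


end Helpers

theorem stmt13 {d n m : ℕ}
    (C : Matrix (Fin d × Fin n) (Fin d × Fin n) ℂ)
    (hC : C.PosSemidef)
    (hrank : C.rank = n)
    -- the partial trace over the first factor is invertible
    (hpt : IsUnit (Matrix.of fun r s : Fin n => ∑ i : Fin d, C (i, r) (i, s)))
    (x : Fin m → (Fin d → ℂ)) (y : Fin m → (Fin n → ℂ))
    (ξ : Fin m → (Fin d × Fin n → ℂ))
    (hξ : ∀ j, ξ j = fun p => x j p.1 * y j p.2)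
    (hdecomp : C = ∑ j, vecMulVec (ξ j) (star (ξ j))) :
    m ≥ n ∧
    ∃ (a : Fin n → (Fin d → ℂ)) (b : Fin n → (Fin n → ℂ)),
      C = ∑ k, vecMulVec (fun p => a k p.1 * b k p.2)
        (star fun p => a k p.1 * b k p.2) := by
  classical
  set Ξ : Matrix (Fin d × Fin n) (Fin m) ℂ := Matrix.of (fun p j => ξ j p) with hΞdef
  have hCΞ : C = Ξ * Ξᴴ := by
    rw [hdecomp]; ext p q
    simp [Matrix.sum_apply, vecMulVec_apply, mul_apply, conjTranspose_apply, hΞdef]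
  have hrankΞ : Ξ.rank = n := by
    rw [← Matrix.rank_self_mul_conjTranspose, ← hCΞ, hrank]
  have hmn : m ≥ n := by
    calc n = Ξ.rank := hrankΞ.symm
    _ ≤ m := by simpa using Ξ.rank_le_card_width
  refine ⟨hmn, ?_⟩
  have hCe : ∀ p q : Fin d × Fin n, C p q
      = ∑ j, (x j p.1 * y j p.2) * star (x j q.1 * y j q.2) := by
    intro p q; rw [hdecomp]
    simp [Matrix.sum_apply, vecMulVec_apply, hξ]
  have hspan : Submodule.span ℂ (y '' {j | x j ≠ 0 ∧ y j ≠ 0}) = ⊤ :=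
    span_y_eq_top C hpt x y hCe
  have hfinV : Module.finrank ℂ (Submodule.span ℂ (Set.range ξ)) = n := by
    have hΞT : Ξᵀ = ξ := by ext j p; rfl
    have h1 := Matrix.rank_eq_finrank_span_cols Ξ
    rw [hrankΞ, Matrix.col, hΞT] at h1
    exact h1.symm
  obtain ⟨u, v, c, hBc, hw⟩ := middle_step x y ξ hξ hspan hfinV
  exact final_step C ξ hdecomp u v c hBc hw

end
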